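/- Let a = a₁⋯a_p and b = b₁⋯b_q be words with pairwise distinct entries (no entry appears in both) such that b is a non-trivial wave. Let 0 ≤ x ≤ p be maximal such that a₁ < a₂ < ⋯ < a_x < b_q (with x = 0 if a₁ > b_q). Then the word ins(a,b) = a₁⋯a_x b₁⋯b_q a_{x+1}⋯a_p satisfies sw(ins(a,b)) = b and ins(a,b) \ sw(ins(a,b)) = a. Moreover, for every word w whose entries are not in increasing order, ins(w \ sw(w), sw(w)) = w. -/

import Mathlib

namespace Paper

/-- number of descents of a word -/
def des : List ℕ → ℕ
  | a :: b :: t => (if b < a then 1 else 0) + des (b :: t)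
  | _ => 0

/-- number of inversions of a word -/
def inv : List ℕ → ℕ
  | [] => 0
  | a :: t => (t.countP fun x => decide (x < a)) + inv t

/-- a word is (strictly) increasing -/
def Incr (w : List ℕ) : Prop := w.Chain' (· < ·)

/-- a word is a hook: `a₁ > a₂` and `a₂ < a₃ < ⋯ < a_s`, length ≥ 2 -/
def IsHook : List ℕ → Prop
  | a :: b :: t => b < a ∧ (b :: t).Chain' (· < ·)
  | _ => False

/-- `(γ, hs)` is the hook factorization data of `w` -/
def IsHookFact (w γ : List ℕ) (hs : List (List ℕ)) : Prop :=
  Incr γ ∧ (∀ h ∈ hs, IsHook h) ∧ w = γ ++ hs.flatten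

/-- the statistic `lec` computed from the hooks of a factorization -/
def lecVal (hs : List (List ℕ)) : ℕ := (hs.map inv).sum

/-- one-line word of `σ ∈ S_n`, with entries in `[1..n]` -/
def word {n : ℕ} (σ : Equiv.Perm (Fin n)) : List ℕ :=
  List.ofFn fun i => (σ i : ℕ) + 1

/-- a word `w₁ ⋯ w_ℓ` with maximum in position `c` is a (nontrivial) reverse wave if
`c ≠ ℓ` and `w₁ < ⋯ < w_{c-1} < w_ℓ < w_{ℓ-1} < ⋯ < w_c`. -/
def IsRevWave (w : List ℕ) : Prop :=
  ∃ c, c + 1 < w.length ∧ (w.take c ++ (w.drop c).reverse).Chain' (· < ·)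

/-- a word `w₁ ⋯ w_ℓ` with maximum in position `c` is a (nontrivial) wave if
`c ≠ ℓ` and `w_ℓ < w_{ℓ-1} < ⋯ < w_{c+1} < w₁ < ⋯ < w_c`. -/
def IsWave (w : List ℕ) : Prop :=
  ∃ c, c + 1 < w.length ∧ ((w.drop (c + 1)).reverse ++ w.take (c + 1)).Chain' (· < ·)

/-- the maximal strictly decreasing run starting below `hi` and staying above `lo` -/
def decRun (hi lo : ℕ) : List ℕ → List ℕ
  | [] => []
  | b :: t => if b < hi ∧ lo < b then b :: decRun b lo t else []

def srwAux (lo : ℕ) : List ℕ → List ℕ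
  | [] => []
  | [a] => [a]
  | a :: b :: t => if a < b then a :: srwAux a (b :: t) else a :: decRun a lo (b :: t)

/-- the special reverse wave of a word: the prefix `w₁ ⋯ w_s` where `t` is the position of the
first descent (the whole word if none) and `s ≥ t` is maximal with
`w_t > w_{t+1} > ⋯ > w_s > w_{t-1}` (convention `w₀ = 0`). -/
def srw (w : List ℕ) : List ℕ := srwAux 0 w

/-- the number of special reverse descents: `des (srw w) + χ(w_s > w_{s+1})` -/
def srdes (w : List ℕ) : ℕ :=
  des (srw w) +
    match (srw w).getLast?, (w.drop (srw w).length).head? with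
    | some x, some y => if y < x then 1 else 0
    | _, _ => 0

/-- the prefix `w₁ ⋯ w_t` of `w` ending at the position `t` of the first descent
(the whole word if there is no descent) -/
def incrPrefix : List ℕ → List ℕ
  | [] => []
  | [a] => [a]
  | a :: b :: t => if a < b then a :: incrPrefix (b :: t) else [a]

/-- the special wave `w_r ⋯ w_t ⋯ w_s` of a word -/
def sw (w : List ℕ) : List ℕ :=
  let pre := incrPrefix w
  match w.drop pre.length with
  | [] => w
  | x :: rs =>
    let kept := pre.takeWhile fun u => decide (u < x)
    pre.drop kept.length ++ x :: decRun x (kept.getLastD 0) rs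

/-- the word `w \ sw(w) = w₁ ⋯ w_{r-1} w_{s+1} ⋯ w_ℓ` obtained removing the special wave -/
def swCompl (w : List ℕ) : List ℕ :=
  let pre := incrPrefix w
  match w.drop pre.length with
  | [] => []
  | x :: rs =>
    let kept := pre.takeWhile fun u => decide (u < x)
    kept ++ rs.drop (decRun x (kept.getLastD 0) rs).length

/-- insertion `ins(a,b) = a₁ ⋯ a_x b₁ ⋯ b_q a_{x+1} ⋯ a_p`, where `x` is maximal with
`a₁ < a₂ < ⋯ < a_x < b_q` -/
def ins (a b : List ℕ) : List ℕ :=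
  let pfx := (incrPrefix a).takeWhile fun u => decide (u < b.getLastD 0)
  pfx ++ b ++ a.drop pfx.length

/-- the word `ρ = ρ₁ ⋯ ρ_m` (entries in `[1..n]`) associated to an injection `Fin m ↪ Fin n` -/
def rho {n m : ℕ} (f : Fin m ↪ Fin n) : List ℕ :=
  List.ofFn fun j => (f j : ℕ) + 1

/-- descent number of the pair `(α₀, ρ)`: `des ρ + #{a ∈ α₀ : a > ρ₁}`,
where `α₀ = [n] \ {ρ₁, …, ρ_m}` -/
def desPair (n : ℕ) {m : ℕ} (f : Fin m ↪ Fin n) : ℕ :=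
  des (rho f) + ((Finset.Icc 1 n).filter fun a => a ∉ rho f ∧ (rho f).headI < a).card

/-- descent number of the pair `(α₀, ρ)`, with `ρ` given as a list -/
def desPairL (n : ℕ) (ρ : List ℕ) : ℕ :=
  des ρ + ((Finset.Icc 1 n).filter fun a => a ∉ ρ ∧ ρ.headI < a).card

/-- the map `μ`, sending `ρ` (with complementary set `α₀ = {α₁ < ⋯ < α_{n-k-1}}`) to
`α₁ ⋯ α_{n-k-m-1} α_{n-k-1} α_{n-k-2} ⋯ α_{n-k-m} ρ₁ ⋯ ρ_{k+1}`,
where `m = #{a ∈ α₀ : a > ρ₁}` -/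
def mu (n : ℕ) (ρ : List ℕ) : List ℕ :=
  let A := ((Finset.Icc 1 n).filter fun a => a ∉ ρ).sort (· ≤ ·)
  let m := (A.filter fun a => decide (ρ.headI < a)).length
  (A.take (A.length - m) ++ (A.drop (A.length - m)).reverse) ++ ρ

end Paper
namespace Paper
open List


lemma incrPrefix_head? : ∀ (a : ℕ) (l : List ℕ), (incrPrefix (a :: l)).head? = some a
  | a, [] => rfl
  | a, b :: t => by rw [incrPrefix]; split <;> rfl

lemma incrPrefix_cons (a : ℕ) (l : List ℕ) : ∃ t, incrPrefix (a :: l) = a :: t := by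
  have h := incrPrefix_head? a l
  cases hP : incrPrefix (a :: l) with
  | nil => rw [hP] at h; simp at h
  | cons x t => rw [hP] at h; simp at h; exact ⟨t, by rw [h]⟩

lemma incrPrefix_chain' : ∀ l : List ℕ, (incrPrefix l).Chain' (· < ·)
  | [] => by simp [incrPrefix, List.Chain']
  | [a] => by simp [incrPrefix, List.Chain']
  | a :: b :: t => by
    rw [incrPrefix]
    split
    · rename_i h
      rw [List.Chain', List.isChain_cons]
      refine ⟨?_, incrPrefix_chain' (b :: t)⟩
      intro y hy
      rw [incrPrefix_head? b t] at hy
      simp at hy; omega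
    · simp [List.Chain']

lemma incrPrefix_prefix : ∀ l : List ℕ, incrPrefix l <+: l
  | [] => by simp [incrPrefix]
  | [a] => by simp [incrPrefix]
  | a :: b :: t => by
    rw [incrPrefix]
    split
    · obtain ⟨r, hr⟩ := incrPrefix_prefix (b :: t)
      exact ⟨r, by simp [hr]⟩
    · exact ⟨b :: t, rfl⟩

lemma incrPrefix_eq_self : ∀ l : List ℕ, l.Chain' (· < ·) → incrPrefix l = l
  | [], _ => rfl
  | [a], _ => rfl
  | a :: b :: t, h => by
    rw [List.Chain', List.isChain_cons_cons] at h
    rw [incrPrefix, if_pos h.1, incrPrefix_eq_self _ h.2]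

/-- the element right after the increasing prefix is ≤ the last element of the prefix -/
lemma incrPrefix_stop : ∀ (l : List ℕ) (z : ℕ),
    (l.drop (incrPrefix l).length).head? = some z → z ≤ (incrPrefix l).getLastD 0
  | [], z => by simp
  | [a], z => by simp [incrPrefix]
  | a :: b :: t, z => by
    rw [incrPrefix]
    split
    · rename_i h
      intro hz
      obtain ⟨t', ht'⟩ := incrPrefix_cons b t
      have h2 := incrPrefix_stop (b :: t) z (by simpa using hz)
      rw [ht'] at h2 ⊢
      simpa using h2
    · rename_i h
      intro hz
      simp at hz ⊢
      omega



lemma chain'_lt_le_getLast : ∀ (l : List ℕ), l.Chain' (· < ·) → ∀ z ∈ l, z ≤ l.getLastD 0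
  | [], _, z, hz => by simp at hz
  | [a], _, z, hz => by simp at hz; simp [hz]
  | a :: b :: t, h, z, hz => by
    rw [List.Chain', List.isChain_cons_cons] at h
    have ih := chain'_lt_le_getLast (b :: t) h.2
    simp only [getLastD_cons] at *
    rcases mem_cons.mp hz with rfl | hz
    · have := ih b (by simp); omega
    · exact ih z hz

lemma chain'_gt_getLast_le : ∀ (l : List ℕ), l.Chain' (· > ·) → ∀ z ∈ l, l.getLastD 0 ≤ z
  | [], _, z, hz => by simp at hz
  | [a], _, z, hz => by simp at hz; simp [hz]
  | a :: b :: t, h, z, hz => by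
    rw [List.Chain', List.isChain_cons_cons] at h
    have ih := chain'_gt_getLast_le (b :: t) h.2
    simp only [getLastD_cons] at *
    rcases mem_cons.mp hz with rfl | hz
    · have := ih b (by simp); omega
    · exact ih z hz

/-- incrPrefix stops inside `k` if the next element is ≤ the last of `k` -/
lemma incrPrefix_append_stop : ∀ (k : List ℕ), k.Chain' (· < ·) → k ≠ [] →
    ∀ (y : ℕ) (m : List ℕ), y ≤ k.getLastD 0 → incrPrefix (k ++ y :: m) = k
  | [], _, hk, _, _, _ => absurd rfl hk
  | [a], _, _, y, m, hy => by
    simp only [getLastD_cons, getLastD_nil] at hy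
    simp [incrPrefix, Nat.not_lt.mpr hy]
  | a :: b :: k', h, _, y, m, hy => by
    rw [List.Chain', List.isChain_cons_cons] at h
    have ih := incrPrefix_append_stop (b :: k') h.2 (by simp) y m (by simpa using hy)
    simpa [incrPrefix, h.1] using ih

/-- incrPrefix passes through `k` if the next element is > the last of `k` -/
lemma incrPrefix_append_go : ∀ (k : List ℕ), k.Chain' (· < ·) →
    ∀ (y : ℕ) (m : List ℕ), k.getLastD 0 < y →
    incrPrefix (k ++ y :: m) = k ++ incrPrefix (y :: m)
  | [], _, y, m, _ => by simp
  | [a], _, y, m, hy => by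
    simp only [getLastD_cons, getLastD_nil] at hy
    obtain ⟨t, ht⟩ := incrPrefix_cons y m
    simp [incrPrefix, hy, ht]
  | a :: b :: k', h, y, m, hy => by
    rw [List.Chain', List.isChain_cons_cons] at h
    have ih := incrPrefix_append_go (b :: k') h.2 y m (by simpa using hy)
    simpa [incrPrefix, h.1] using ih

/-- key lemma: takeWhile (< c) of incrPrefix of (k ++ m) equals k -/
lemma takeWhile_incrPrefix (k m : List ℕ) (c : ℕ) (hk : k.Chain' (· < ·))
    (hlt : ∀ z ∈ k, z < c)
    (hm : ∀ z ∈ m.head?, c ≤ z ∨ (k ≠ [] ∧ z ≤ k.getLastD 0)) :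
    (incrPrefix (k ++ m)).takeWhile (fun u => decide (u < c)) = k := by
  have hkall : k.takeWhile (fun u => decide (u < c)) = k :=
    takeWhile_eq_self_iff.mpr (fun z hz => by simpa using hlt z hz)
  cases m with
  | nil => rw [append_nil, incrPrefix_eq_self k hk, hkall]
  | cons y m' =>
    rcases hm y rfl with hy | ⟨hne, hy⟩
    · rcases Nat.lt_or_ge (k.getLastD 0) y with h1 | h1
      · rw [incrPrefix_append_go k hk y m' h1]
        obtain ⟨t, ht⟩ := incrPrefix_cons y m'
        rw [ht, takeWhile_append_of_pos (fun z hz => by simpa using hlt z hz)]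
        simp [Nat.not_lt.mpr hy]
      · cases hk' : k with
        | nil => subst hk'; simp only [nil_append]
                 obtain ⟨t, ht⟩ := incrPrefix_cons y m'
                 rw [ht]; simp [Nat.not_lt.mpr hy]
        | cons a k'' =>
          rw [← hk']
          rw [incrPrefix_append_stop k hk (by simp [hk']) y m' h1, hkall]
    · rw [incrPrefix_append_stop k hk hne y m' hy, hkall]



lemma decRun_prefix : ∀ (hi lo : ℕ) (l : List ℕ), decRun hi lo l <+: l
  | hi, lo, [] => by simp [decRun]
  | hi, lo, b :: t => by
    rw [decRun]
    split
    · obtain ⟨r, hr⟩ := decRun_prefix b lo t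
      exact ⟨r, by simp [hr]⟩
    · simp

lemma decRun_gt_lo : ∀ (hi lo : ℕ) (l : List ℕ), ∀ z ∈ decRun hi lo l, lo < z
  | hi, lo, [], z => by simp [decRun]
  | hi, lo, b :: t, z => by
    rw [decRun]
    split
    · rename_i h
      intro hz
      rcases mem_cons.mp hz with rfl | hz
      · exact h.2
      · exact decRun_gt_lo b lo t z hz
    · simp

lemma decRun_chain : ∀ (hi lo : ℕ) (l : List ℕ), (hi :: decRun hi lo l).Chain' (· > ·)
  | hi, lo, [] => by simp [decRun, List.Chain']
  | hi, lo, b :: t => by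
    rw [decRun]
    split
    · rename_i h
      exact List.isChain_cons_cons.mpr ⟨h.1, decRun_chain b lo t⟩
    · simp [List.Chain']

lemma decRun_stop : ∀ (hi lo : ℕ) (l : List ℕ) (z : ℕ),
    (l.drop (decRun hi lo l).length).head? = some z →
    ¬(z < (hi :: decRun hi lo l).getLastD 0 ∧ lo < z)
  | hi, lo, [], z => by simp [decRun]
  | hi, lo, b :: t, z => by
    rw [decRun]
    split
    · rename_i h
      intro hz
      have := decRun_stop b lo t z (by simpa using hz)
      simpa using this
    · rename_i h
      intro hz
      simp at hz
      subst hz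
      simpa using h

lemma decRun_eq : ∀ (hi lo : ℕ) (d m : List ℕ), (hi :: d).Chain' (· > ·) →
    (∀ z ∈ d, lo < z) →
    (∀ z ∈ m.head?, ¬(z < (hi :: d).getLastD 0 ∧ lo < z)) →
    decRun hi lo (d ++ m) = d
  | hi, lo, [], m, _, _, hm => by
    cases m with
    | nil => rfl
    | cons y t =>
      have := hm y rfl
      simp only [getLastD_cons, getLastD_nil] at this
      rw [nil_append, decRun, if_neg this]
  | hi, lo, b :: d', m, hch, hd, hm => by
    rw [List.Chain', List.isChain_cons_cons] at hch
    rw [cons_append, decRun, if_pos ⟨hch.1, hd b (by simp)⟩]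
    rw [decRun_eq b lo d' m hch.2 (fun z hz => hd z (by simp [hz])) (by simpa using hm)]

/-- the element of `a` right after `takeWhile (<c) (incrPrefix a)` is ≥ c or ≤ last of the prefix -/
lemma ins_stop : ∀ (a : List ℕ) (c z : ℕ),
    (a.drop ((incrPrefix a).takeWhile (fun u => decide (u < c))).length).head? = some z →
    c ≤ z ∨ ∃ w ∈ (incrPrefix a).takeWhile (fun u => decide (u < c)), z ≤ w
  | [], c, z => by simp
  | [a], c, z => by
    by_cases h : a < c <;> simp [incrPrefix, h]
    omega
  | a :: b :: t, c, z => by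
    rw [incrPrefix]
    split
    · rename_i hab
      obtain ⟨t', ht'⟩ := incrPrefix_cons b t
      by_cases hac : a < c
      · simp only [takeWhile_cons, decide_eq_true_eq, hac, if_true, length_cons,
          drop_succ_cons]
        intro hz
        rcases ins_stop (b :: t) c z hz with h1 | ⟨w, hw, hzw⟩
        · exact Or.inl h1
        · exact Or.inr ⟨w, by simp [hw], hzw⟩
      · simp [hac, Nat.le_of_not_lt hac]
        intro hz; omega
    · rename_i hab
      by_cases hac : a < c
      · simp [hac]
        intro hz; subst hz
        right; omega
      · simp [hac]
        intro hz; omega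


lemma getLastD_mem' (l : List ℕ) (h : l ≠ []) (d : ℕ) : l.getLastD d ∈ l := by
  cases l with
  | nil => simp at h
  | cons a t => rw [getLastD_cons]; exact getLastD_mem_cons

lemma getLast?_some_getLastD (l : List ℕ) (h : l ≠ []) : l.getLast? = some (l.getLastD 0) := by
  cases l with
  | nil => simp at h
  | cons a t =>
    simp only [getLastD_eq_getLast?]
    cases h2 : (a :: t).getLast? with
    | none => simp at h2
    | some z => rfl

lemma getLastD_append' (l m : List ℕ) (h : m ≠ []) : (l ++ m).getLastD 0 = m.getLastD 0 := by
  simp only [getLastD_eq_getLast?, getLast?_append_of_ne_nil _ h]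



lemma sw_eq (w k : List ℕ) (x : ℕ) (rs : List ℕ) (hk : incrPrefix w = k)
    (hw : w.drop k.length = x :: rs) :
    sw w = k.drop (k.takeWhile (fun u => decide (u < x))).length ++
      x :: decRun x ((k.takeWhile (fun u => decide (u < x))).getLastD 0) rs := by
  rw [sw, hk, hw]

lemma swCompl_eq (w k : List ℕ) (x : ℕ) (rs : List ℕ) (hk : incrPrefix w = k)
    (hw : w.drop k.length = x :: rs) :
    swCompl w = k.takeWhile (fun u => decide (u < x)) ++
      rs.drop (decRun x ((k.takeWhile (fun u => decide (u < x))).getLastD 0) rs).length := by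
  rw [swCompl, hk, hw]

end Paper

/-- if `a`, `b` are words with pairwise distinct entries and `b` is a
non-trivial wave, then `ins a b` (insertion of `b` inside `a` after the maximal increasing
prefix of `a` whose entries are smaller than the last entry of `b`) satisfies
`sw (ins a b) = b` and `(ins a b) \ sw (ins a b) = a`; moreover for every word `w` not in
increasing order, `ins (w \ sw w) (sw w) = w`. -/
theorem Paper.statement13 :
    (∀ a b : List ℕ, (a ++ b).Nodup → (∀ x ∈ a ++ b, 0 < x) → IsWave b →
      sw (ins a b) = b ∧ swCompl (ins a b) = a) ∧
    (∀ w : List ℕ, w.Nodup → (∀ x ∈ w, 0 < x) → ¬ Incr w →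
      ins (swCompl w) (sw w) = w) := by
  constructor
  · intro a b hnd hpos hwv
    obtain ⟨c, hc, hch⟩ := hwv
    clear hnd
    have hb : b.take (c+1) ++ b.drop (c+1) = b := List.take_append_drop _ _
    obtain ⟨uh, u', hu⟩ : ∃ uh u', b.take (c+1) = uh :: u' := by
      cases h : b.take (c+1) with
      | nil =>
        exfalso
        have := congrArg List.length h
        simp only [List.length_take, List.length_nil] at this
        omega
      | cons p t => exact ⟨p, t, rfl⟩
    obtain ⟨y₀, vt, hv⟩ : ∃ y₀ vt, b.drop (c+1) = y₀ :: vt := by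
      cases h : b.drop (c+1) with
      | nil =>
        exfalso
        have := congrArg List.length h
        simp only [List.length_drop, List.length_nil] at this
        omega
      | cons p t => exact ⟨p, t, rfl⟩
    rw [hu, hv] at hb hch
    rw [List.Chain', List.isChain_append] at hch
    obtain ⟨hvr, hUc, hlink⟩ := hch
    have hVdec : (y₀ :: vt).Chain' (· > ·) := by
      rw [List.isChain_reverse] at hvr; exact hvr
    have hy0u : y₀ < uh := by
      refine hlink y₀ ?_ uh ?_
      · rw [List.getLast?_reverse]; rfl
      · rfl
    set bl := (y₀ :: vt).getLastD 0 with hbl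
    have hblV : ∀ z ∈ y₀ :: vt, bl ≤ z := chain'_gt_getLast_le _ hVdec
    have hblb : b.getLastD 0 = bl := by
      rw [← hb, getLastD_append' _ _ (by simp)]
    have hblpos : 0 < bl := by
      refine hpos bl ?_
      have : bl ∈ y₀ :: vt := hbl ▸ getLastD_mem' _ (by simp) 0
      rw [← hb] at *
      simp only [List.mem_append]
      right; right; exact this
    set pfx := (incrPrefix a).takeWhile (fun z => decide (z < bl)) with hpfx
    have hpfx_ch : pfx.Chain' (· < ·) := (incrPrefix_chain' a).prefix (List.takeWhile_prefix _)
    have hpfx_lt : ∀ z ∈ pfx, z < bl := fun z hz => by simpa using List.mem_takeWhile_imp hz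
    obtain ⟨rest, hrest⟩ : ∃ rest, pfx ++ rest = a :=
      (List.takeWhile_prefix _).trans (incrPrefix_prefix a)
    have hdropa : a.drop pfx.length = rest := by rw [← hrest, List.drop_left]
    have hins : ins a b = (pfx ++ (uh :: u')) ++ (y₀ :: (vt ++ rest)) := by
      simp only [ins, hblb]
      rw [← hpfx, hdropa, ← hb]
      simp [List.append_assoc]
    have hkch : (pfx ++ (uh :: u')).Chain' (· < ·) := by
      rw [List.Chain', List.isChain_append]
      refine ⟨hpfx_ch, hUc, ?_⟩
      intro z hz y hy
      have hzm : z ∈ pfx := List.mem_of_mem_getLast? hz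
      have hyu : y = uh := by simpa using hy.symm
      subst hyu
      have h1 := hpfx_lt z hzm
      have h2 := hblV y₀ (by simp)
      omega
    have huh_le : uh ≤ (uh :: u').getLastD 0 := chain'_lt_le_getLast _ hUc uh (by simp)
    have hklast : (pfx ++ uh :: u').getLastD 0 = (uh :: u').getLastD 0 :=
      getLastD_append' _ _ (by simp)
    have hip : incrPrefix (ins a b) = pfx ++ (uh :: u') := by
      rw [hins]
      exact incrPrefix_append_stop _ hkch (by simp) y₀ _ (by rw [hklast]; omega)
    have hdrop : (ins a b).drop (pfx ++ uh :: u').length = y₀ :: (vt ++ rest) := by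
      rw [hins, List.drop_left]
    have hkept : (pfx ++ uh :: u').takeWhile (fun z => decide (z < y₀)) = pfx := by
      rw [List.takeWhile_append_of_pos (fun z hz => by
        have h1 := hpfx_lt z hz
        have h2 := hblV y₀ (by simp)
        simp; omega)]
      have : ¬ uh < y₀ := by omega
      simp [this]
    set lo := pfx.getLastD 0 with hlo
    have hlobl : lo < bl := by
      rcases eq_or_ne pfx [] with h | h
      · rw [hlo, h]; simpa using hblpos
      · exact hpfx_lt lo (hlo ▸ getLastD_mem' pfx h 0)
    have hdec : decRun y₀ lo (vt ++ rest) = vt := by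
      refine decRun_eq y₀ lo vt rest hVdec
        (fun z hz => lt_of_lt_of_le hlobl (hblV z (by simp [hz]))) ?_
      intro z hz
      have h2 := ins_stop a bl z (by rw [← hpfx, hdropa]; exact Option.mem_def.mp hz)
      rw [← hbl]
      rcases h2 with h2 | ⟨q, hq, hzq⟩
      · omega
      · have h3 := chain'_lt_le_getLast pfx hpfx_ch q hq
        omega
    constructor
    · rw [sw_eq (ins a b) _ y₀ (vt ++ rest) hip hdrop, hkept, List.drop_left, ← hlo, hdec]
      exact hb
    · rw [swCompl_eq (ins a b) _ y₀ (vt ++ rest) hip hdrop, hkept, ← hlo, hdec,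
        List.drop_left]
      exact hrest
  · intro w hnd hpos hninc
    clear hnd
    have hwne : w ≠ [] := by rintro rfl; exact hninc List.isChain_nil
    set P := incrPrefix w with hPdef
    have hPw : P ≠ w := fun h => hninc (h ▸ incrPrefix_chain' w)
    have hPne : P ≠ [] := by
      cases w with
      | nil => exact absurd rfl hwne
      | cons a t =>
        obtain ⟨t', ht'⟩ := incrPrefix_cons a t
        rw [hPdef, ht']
        simp
    obtain ⟨r, hr⟩ := incrPrefix_prefix w
    have hdropP : w.drop P.length = r := by
      conv_lhs => rw [← hr]
      rw [List.drop_left]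
    obtain ⟨x, rs, rfl⟩ : ∃ x rs, r = x :: rs := by
      cases r with
      | nil => exact absurd (by rw [← hr]; simp [hPdef]) hPw
      | cons p t => exact ⟨p, t, rfl⟩
    have hPch : P.Chain' (· < ·) := incrPrefix_chain' w
    have hxP : x ≤ P.getLastD 0 := incrPrefix_stop w x (by rw [← hPdef, hdropP]; rfl)
    set kept := P.takeWhile (fun z => decide (z < x)) with hkeptdef
    have hkch : kept.Chain' (· < ·) := hPch.prefix (List.takeWhile_prefix _)
    have hklt : ∀ z ∈ kept, z < x := fun z hz => by simpa using List.mem_takeWhile_imp hz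
    obtain ⟨mid, hmid⟩ : ∃ mid, kept ++ mid = P := List.takeWhile_prefix _
    have hdropk : P.drop kept.length = mid := by
      conv_lhs => rw [← hmid]
      rw [List.drop_left]
    have hw2 : w = kept ++ mid ++ x :: rs := by rw [hmid]; exact hr.symm
    set lo := kept.getLastD 0 with hlodef
    set d := decRun x lo rs with hddef
    obtain ⟨rs', hrs'⟩ : ∃ rs', d ++ rs' = rs := decRun_prefix x lo rs
    have hdroprs : rs.drop d.length = rs' := by
      conv_lhs => rw [← hrs']
      rw [List.drop_left]
    have hsw : sw w = mid ++ x :: d := by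
      rw [sw_eq w P x rs hPdef.symm hdropP, ← hkeptdef, hdropk, ← hlodef, ← hddef]
    have hswc : swCompl w = kept ++ rs' := by
      rw [swCompl_eq w P x rs hPdef.symm hdropP, ← hkeptdef, ← hlodef, ← hddef, hdroprs]
    rw [hsw, hswc]
    have hxpos : 0 < x := hpos x (by rw [hw2]; simp)
    have hlo_lt_x : lo < x := by
      rcases eq_or_ne kept [] with h | h
      · rw [hlodef, h]; simpa using hxpos
      · exact hklt lo (hlodef ▸ getLastD_mem' kept h 0)
    set bl := (x :: d).getLastD 0 with hbldef
    have hblb : (mid ++ x :: d).getLastD 0 = bl := getLastD_append' _ _ (by simp)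
    have hbl_mem : bl ∈ x :: d := hbldef ▸ getLastD_mem' _ (by simp) 0
    have hlobl : lo < bl := by
      rcases List.mem_cons.mp hbl_mem with h | h
      · rw [h]; exact hlo_lt_x
      · exact decRun_gt_lo x lo rs bl (hddef ▸ h)
    have hkept_lt_bl : ∀ z ∈ kept, z < bl := fun z hz =>
      lt_of_le_of_lt (hlodef ▸ chain'_lt_le_getLast kept hkch z hz) hlobl
    have hstop : ∀ z ∈ rs'.head?, bl ≤ z ∨ (kept ≠ [] ∧ z ≤ kept.getLastD 0) := by
      intro z hz
      have h2 := decRun_stop x lo rs z (by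
        rw [← hddef, hdroprs]; exact hz)
      rw [← hddef, ← hbldef] at h2
      by_cases hzbl : bl ≤ z
      · exact Or.inl hzbl
      · right
        have hzlo : z ≤ lo := by omega
        refine ⟨?_, hlodef ▸ hzlo⟩
        rintro hke
        rw [hlodef, hke] at hzlo
        simp at hzlo
        have hzw : 0 < z := by
          refine hpos z ?_
          rw [hw2]
          have : z ∈ rs := hrs' ▸ List.mem_append_right d (by
            have := Option.mem_def.mp hz
            exact List.mem_of_mem_head? hz)
          simp [this]
        omega
    have hpfx2 : (incrPrefix (kept ++ rs')).takeWhile (fun z => decide (z < bl)) = kept :=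
      takeWhile_incrPrefix kept rs' bl hkch hkept_lt_bl hstop
    simp only [ins, hblb, hpfx2, List.drop_left]
    rw [hw2, ← hrs']
    simp [List.append_assoc]
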